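/- Let k ≥ 2 and j ≥ 1 be integers and let n be a positive multiple of k. The number of pairs (T, c), where T ⊆ {1, …, n} is a set such that any two distinct elements s, t ∈ T satisfy |s − t| > k, and c : T → {1, …, j} is any function, is at most j^{n/k} · (2n/k) · C(n, n/k). -/

import Mathlib

private lemma choose_mono_aux (n : ℕ) : ∀ i q : ℕ, i ≤ q → q ≤ n / 2 →
    n.choose i ≤ n.choose q := by
  intro i q h hq
  induction q with
  | zero => simp [Nat.le_zero.mp h]
  | succ m ih =>
    rcases Nat.eq_or_lt_of_le h with rfl | h'
    · exact le_refl _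
    · calc n.choose i ≤ n.choose m := ih (by omega) (by omega)
        _ ≤ n.choose (m + 1) := Nat.choose_le_succ_of_lt_half_left (by omega)

open Classical in
/-- The number of pairs `(T, c)` with `c : T → {1, …, j}` equals `∑_T j ^ |T|`. -/
theorem stmt6 (k j n : ℕ) (hk : 2 ≤ k) (hj : 1 ≤ j) (hn : 0 < n) (hkn : k ∣ n) :
    (∑ T ∈ (Finset.Icc 1 n).powerset.filter
        (fun T : Finset ℕ => ∀ s ∈ T, ∀ t ∈ T, s ≠ t → (k : ℤ) < |(s : ℤ) - (t : ℤ)|),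
      j ^ T.card)
      ≤ j ^ (n / k) * (2 * (n / k)) * n.choose (n / k) := by
  set q := n / k with hq
  have hk0 : 0 < k := by omega
  have hkle : k ≤ n := Nat.le_of_dvd hn hkn
  have hkq : k * q = n := Nat.mul_div_cancel' hkn
  have hq1 : 1 ≤ q := by
    rw [hq, Nat.le_div_iff_mul_le hk0]; omega
  set S := (Finset.Icc 1 n).powerset.filter
      (fun T : Finset ℕ => ∀ s ∈ T, ∀ t ∈ T, s ≠ t → (k : ℤ) < |(s : ℤ) - (t : ℤ)|) with hS
  have hcard : ∀ T ∈ S, T.card ≤ q := by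
    intro T hT
    rw [hS, Finset.mem_filter, Finset.mem_powerset] at hT
    obtain ⟨hsub, hgap⟩ := hT
    have hle : T.card ≤ (Finset.range q).card := by
      apply Finset.card_le_card_of_injOn (fun t => (t - 1) / k)
      · intro t ht
        have h1 := Finset.mem_Icc.mp (hsub ht)
        rw [Finset.coe_range, Set.mem_Iio]; beta_reduce
        have h2 : (t - 1) / k ≤ (n - 1) / k := Nat.div_le_div_right (by omega)
        have hqk : q * k = n := by rw [mul_comm]; exact hkq
        have h3 : (n - 1) / k < q := by
          rw [Nat.div_lt_iff_lt_mul hk0]; omega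
        omega
      · intro s hs t ht hst
        by_contra hne
        have hg := hgap s hs t ht hne
        have hs1 := (Finset.mem_Icc.mp (hsub hs)).1
        have ht1 := (Finset.mem_Icc.mp (hsub ht)).1
        simp only at hst
        have e1 := Nat.div_add_mod (s - 1) k
        have e2 := Nat.div_add_mod (t - 1) k
        have m1 : (s - 1) % k < k := Nat.mod_lt _ hk0
        have m2 : (t - 1) % k < k := Nat.mod_lt _ hk0
        rw [hst] at e1
        have hb1 : s < t + k := by omega
        have hb2 : t < s + k := by omega
        have key : |(s : ℤ) - (t : ℤ)| < k := by
          rw [abs_lt]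
          constructor <;> omega
        linarith
    simpa using hle
  have hScard : S.card ≤ (q + 1) * n.choose q := by
    have hsub : S ⊆ (Finset.range (q + 1)).biUnion
        (fun i => (Finset.Icc 1 n).powersetCard i) := by
      intro T hT
      have hTc := hcard T hT
      rw [hS, Finset.mem_filter, Finset.mem_powerset] at hT
      simp only [Finset.mem_biUnion, Finset.mem_range, Finset.mem_powersetCard]
      exact ⟨T.card, by omega, hT.1, rfl⟩
    calc S.card ≤ _ := Finset.card_le_card hsub
      _ ≤ ∑ i ∈ Finset.range (q + 1), ((Finset.Icc 1 n).powersetCard i).card :=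
          Finset.card_biUnion_le
      _ = ∑ i ∈ Finset.range (q + 1), n.choose i := by
          simp [Finset.card_powersetCard, Nat.card_Icc]
      _ ≤ ∑ i ∈ Finset.range (q + 1), n.choose q := by
          apply Finset.sum_le_sum
          intro i hi
          rw [Finset.mem_range] at hi
          have hq2 : q ≤ n / 2 := Nat.div_le_div_left hk (by norm_num)
          exact choose_mono_aux n i q (by omega) hq2
      _ = (q + 1) * n.choose q := by
          rw [Finset.sum_const, Finset.card_range, smul_eq_mul]
  calc (∑ T ∈ S, j ^ T.card) ≤ ∑ T ∈ S, j ^ q :=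
        Finset.sum_le_sum (fun T hT => Nat.pow_le_pow_right hj (hcard T hT))
    _ = S.card * j ^ q := by rw [Finset.sum_const, smul_eq_mul]
    _ ≤ ((q + 1) * n.choose q) * j ^ q := by
        exact Nat.mul_le_mul_right _ hScard
    _ ≤ (2 * q * n.choose q) * j ^ q := by
        have : q + 1 ≤ 2 * q := by omega
        exact Nat.mul_le_mul_right _ (Nat.mul_le_mul_right _ this)
    _ = j ^ q * (2 * q) * n.choose q := by ring
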